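/- Let ψ : ℝ⁴ → Cl be differentiable and satisfy the Killing spin field equation with coefficient functions ω_μ^{νσ}, H_μ^{νi}, A_μ^{ij}. Then for every normal index i ∈ {4,…,9} and every σ ∈ {0,1,2,3}: ∂_σ( reverse(ψ)·e_i·ψ ) = − Σ_{β=0}^{3} H_σ^{βi} · reverse(ψ)·e_β·ψ + Σ_{j=4}^{9} A_σ^{ij} · reverse(ψ)·e_j·ψ. (The normal frame vectors 𝐞_i = reverse(ψ)e_iψ satisfy d𝐞_i = −H_i^β 𝐞_β + A_i^j 𝐞_j.) -/

import Mathlib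

open CliffordAlgebra

noncomputable section

/-- The Minkowski signs `(-1,1,…,1)` on `ℝ^{10}`. -/
def ηv : Fin 10 → ℝ := fun I => if I = 0 then -1 else 1

/-- The Minkowski metric `η = diag(-1,1,…,1)` as a matrix. -/
def ηm : Fin 10 → Fin 10 → ℝ := fun I J => if I = J then ηv I else 0

/-- The Minkowski quadratic form `Q(x) = -x₀² + x₁² + ⋯ + x₉²` on `ℝ^{10}`. -/
def Qm : QuadraticForm ℝ (Fin 10 → ℝ) := QuadraticMap.weightedSumSquares ℝ ηv

/-- The Clifford algebra of the Minkowski form on `ℝ^{10}`. -/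
abbrev Cl := CliffordAlgebra Qm

/-- The images `e_I` of the standard basis vectors of `ℝ^{10}` in `Cl`. -/
def e (I : Fin 10) : Cl := ι Qm (Pi.single I 1)

/-- Inclusion of tangent indices `{0,…,3}` into `{0,…,9}`. -/
def tIdx (μ : Fin 4) : Fin 10 := ⟨μ.1, by omega⟩

/-- Inclusion of normal indices `{4,…,9}` into `{0,…,9}`. -/
def nIdx (i : Fin 6) : Fin 10 := ⟨i.1 + 4, by omega⟩

/-- The Clifford-algebra-valued coefficient `K_μ` of the Killing spin field equation:
`K_μ = (1/4)·Σ_{ν,σ} ω_μ^{νσ} e_ν e_σ + (1/2)·Σ_{ν,i} H_μ^{νi} e_ν e_i + (1/4)·Σ_{i,j} A_μ^{ij} e_i e_j`. -/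
def Kfield (ω : Fin 4 → Fin 4 → Fin 4 → (Fin 4 → ℝ) → ℝ)
    (H : Fin 4 → Fin 4 → Fin 6 → (Fin 4 → ℝ) → ℝ)
    (A : Fin 4 → Fin 6 → Fin 6 → (Fin 4 → ℝ) → ℝ)
    (μ : Fin 4) (x : Fin 4 → ℝ) : Cl :=
  (1/4 : ℝ) • ∑ ν : Fin 4, ∑ σ : Fin 4, ω μ ν σ x • (e (tIdx ν) * e (tIdx σ))
    + (1/2 : ℝ) • ∑ ν : Fin 4, ∑ i : Fin 6, H μ ν i x • (e (tIdx ν) * e (nIdx i))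
    + (1/4 : ℝ) • ∑ i : Fin 6, ∑ j : Fin 6, A μ i j x • (e (nIdx i) * e (nIdx j))

lemma Qm_apply (v : Fin 10 → ℝ) : Qm v = ∑ k, ηv k * (v k * v k) := by
  simp [Qm, QuadraticMap.weightedSumSquares_apply, smul_eq_mul]

lemma Qm_single (I : Fin 10) (c : ℝ) : Qm (Pi.single I c) = ηv I * (c * c) := by
  rw [Qm_apply, Finset.sum_eq_single I]
  · simp
  · intro k _ hk; simp [Pi.single_apply, hk]
  · simp

lemma polar_single (I J : Fin 10) :
    QuadraticMap.polar Qm (Pi.single I 1) (Pi.single J 1) = 2 * ηm I J := by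
  by_cases h : I = J
  · subst h
    rw [QuadraticMap.polar, ← Pi.single_add, Qm_single, Qm_single]
    simp [ηm]; ring
  · have hsum : Qm ((Pi.single I 1 + Pi.single J 1 : Fin 10 → ℝ)) = ηv I + ηv J := by
      rw [Qm_apply]
      have key : ∀ k : Fin 10,
          ηv k * (((Pi.single I 1 + Pi.single J 1 : Fin 10 → ℝ)) k *
            ((Pi.single I 1 + Pi.single J 1 : Fin 10 → ℝ)) k)
          = ηv k * ((Pi.single I 1 : Fin 10 → ℝ) k * (Pi.single I 1 : Fin 10 → ℝ) k)
            + ηv k * ((Pi.single J 1 : Fin 10 → ℝ) k * (Pi.single J 1 : Fin 10 → ℝ) k) := by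
        intro k
        rcases eq_or_ne k I with rfl | hkI
        · simp [Pi.single_apply, Ne.symm h]
        · rcases eq_or_ne k J with rfl | hkJ
          · simp [Pi.single_apply, hkI]
          · simp [Pi.single_apply, hkI, hkJ]
      rw [Finset.sum_congr rfl fun k _ => key k, Finset.sum_add_distrib]
      have hone : ∀ L : Fin 10,
          (∑ k : Fin 10, ηv k * ((Pi.single L 1 : Fin 10 → ℝ) k * (Pi.single L 1 : Fin 10 → ℝ) k)) = ηv L := by
        intro L
        rw [Finset.sum_eq_single L]
        · simp
        · intro k _ hk; simp [Pi.single_apply, hk]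
        · simp
      rw [hone, hone]
    rw [QuadraticMap.polar, hsum, Qm_single, Qm_single, ηm, if_neg h]
    ring

lemma e_mul_add (I J : Fin 10) :
    e I * e J + e J * e I = algebraMap ℝ Cl (2 * ηm I J) := by
  rw [e, e, ι_mul_ι_add_swap, polar_single]

lemma e_sq (I : Fin 10) : e I * e I = algebraMap ℝ Cl (ηv I) := by
  rw [e, ι_sq_scalar, Qm_single]; norm_num

lemma e_swap (I J : Fin 10) : e J * e I = (2 * ηm I J) • (1 : Cl) - e I * e J := by
  have := e_mul_add I J
  rw [Algebra.algebraMap_eq_smul_one] at this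
  exact eq_sub_of_add_eq (by rw [add_comm]; exact this)

lemma e_triple (a b c : Fin 10) :
    e a * (e b * e c) + e c * (e b * e a) =
      (2 * ηm b c) • e a - (2 * ηm a c) • e b + (2 * ηm a b) • e c := by
  have h : e c * (e b * e a) =
      (2 * ηm b c) • e a - (2 * ηm a c) • e b + (2 * ηm a b) • e c - e a * (e b * e c) := by
    calc e c * (e b * e a) = (e c * e b) * e a := by rw [mul_assoc]
      _ = ((2 * ηm b c) • (1:Cl) - e b * e c) * e a := by rw [e_swap]
      _ = (2 * ηm b c) • e a - e b * (e c * e a) := by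
          rw [sub_mul, smul_mul_assoc, one_mul, mul_assoc]
      _ = (2 * ηm b c) • e a - e b * ((2 * ηm a c) • (1:Cl) - e a * e c) := by rw [e_swap]
      _ = (2 * ηm b c) • e a - (2 * ηm a c) • e b + (e b * e a) * e c := by
          rw [mul_sub, mul_smul_comm, mul_one, ← mul_assoc]
          abel
      _ = (2 * ηm b c) • e a - (2 * ηm a c) • e b + ((2 * ηm a b) • (1:Cl) - e a * e b) * e c := by
          rw [e_swap]
      _ = (2 * ηm b c) • e a - (2 * ηm a c) • e b + (2 * ηm a b) • e c - e a * (e b * e c) := by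
          rw [sub_mul, smul_mul_assoc, one_mul, mul_assoc, add_sub_assoc]
  rw [h]; abel

lemma ηm_tt (ν σ' : Fin 4) (hne : ν ≠ σ') : ηm (tIdx ν) (tIdx σ') = 0 := by
  rw [ηm, if_neg]; simp only [tIdx, Fin.mk.injEq]; exact fun h => hne (Fin.ext h)

lemma ηm_tn (ν : Fin 4) (j : Fin 6) : ηm (tIdx ν) (nIdx j) = 0 := by
  rw [ηm, if_neg]; simp only [tIdx, nIdx, Fin.mk.injEq]; omega

lemma ηm_nt (j : Fin 6) (ν : Fin 4) : ηm (nIdx j) (tIdx ν) = 0 := by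
  rw [ηm, if_neg]; simp only [tIdx, nIdx, Fin.mk.injEq]; omega

lemma ηm_nn (j k : Fin 6) : ηm (nIdx j) (nIdx k) = if j = k then 1 else 0 := by
  rcases eq_or_ne j k with rfl | h
  · rw [ηm, if_pos rfl, if_pos rfl, ηv, if_neg]
    simp only [nIdx, Fin.ext_iff]; omega
  · rw [ηm, if_neg, if_neg h]
    simp only [nIdx, Fin.mk.injEq]; intro hh; exact h (Fin.ext (by omega))

lemma reverse_e (I : Fin 10) : reverse (Q := Qm) (e I) = e I := reverse_ι _

lemma key_alg (w : Fin 4 → Fin 4 → ℝ) (h : Fin 4 → Fin 6 → ℝ) (a : Fin 6 → Fin 6 → ℝ)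
    (hw : ∀ ν σ', w ν σ' = - w σ' ν) (ha : ∀ j k, a j k = - a k j) (i : Fin 6) :
    reverse (Q := Qm) ((1/4 : ℝ) • ∑ ν : Fin 4, ∑ σ' : Fin 4, w ν σ' • (e (tIdx ν) * e (tIdx σ'))
        + (1/2 : ℝ) • ∑ ν : Fin 4, ∑ j : Fin 6, h ν j • (e (tIdx ν) * e (nIdx j))
        + (1/4 : ℝ) • ∑ j : Fin 6, ∑ k : Fin 6, a j k • (e (nIdx j) * e (nIdx k))) * e (nIdx i)
      + e (nIdx i) * ((1/4 : ℝ) • ∑ ν : Fin 4, ∑ σ' : Fin 4, w ν σ' • (e (tIdx ν) * e (tIdx σ'))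
        + (1/2 : ℝ) • ∑ ν : Fin 4, ∑ j : Fin 6, h ν j • (e (tIdx ν) * e (nIdx j))
        + (1/4 : ℝ) • ∑ j : Fin 6, ∑ k : Fin 6, a j k • (e (nIdx j) * e (nIdx k)))
    = - ∑ β : Fin 4, h β i • e (tIdx β) + ∑ j : Fin 6, a i j • e (nIdx j) := by
  have hw0 : ∀ ν, w ν ν = 0 := fun ν => by have := hw ν ν; linarith
  have ha0 : ∀ j, a j j = 0 := fun j => by have := ha j j; linarith
  set E := e (nIdx i) with hE
  have hrev : reverse (Q := Qm) ((1/4 : ℝ) • ∑ ν : Fin 4, ∑ σ' : Fin 4, w ν σ' • (e (tIdx ν) * e (tIdx σ'))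
        + (1/2 : ℝ) • ∑ ν : Fin 4, ∑ j : Fin 6, h ν j • (e (tIdx ν) * e (nIdx j))
        + (1/4 : ℝ) • ∑ j : Fin 6, ∑ k : Fin 6, a j k • (e (nIdx j) * e (nIdx k)))
      = (1/4 : ℝ) • ∑ ν : Fin 4, ∑ σ' : Fin 4, w ν σ' • (e (tIdx σ') * e (tIdx ν))
        + (1/2 : ℝ) • ∑ ν : Fin 4, ∑ j : Fin 6, h ν j • (e (nIdx j) * e (tIdx ν))
        + (1/4 : ℝ) • ∑ j : Fin 6, ∑ k : Fin 6, a j k • (e (nIdx k) * e (nIdx j)) := by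
    simp [map_add, map_smul, map_sum, reverse.map_mul, reverse_e]
  rw [hrev]
  have expand : ∀ (T U : Fin 4 → Fin 4 → Cl) (c : Fin 4 → Fin 4 → ℝ),
      (∑ ν : Fin 4, ∑ σ' : Fin 4, c ν σ' • T ν σ') * E + E * (∑ ν : Fin 4, ∑ σ' : Fin 4, c ν σ' • U ν σ')
        = ∑ ν : Fin 4, ∑ σ' : Fin 4, c ν σ' • (T ν σ' * E + E * U ν σ') := by
    intro T U c
    simp only [Finset.sum_mul, Finset.mul_sum, smul_mul_assoc, mul_smul_comm, smul_add,
      Finset.sum_add_distrib]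
  have expand2 : ∀ (T U : Fin 4 → Fin 6 → Cl) (c : Fin 4 → Fin 6 → ℝ),
      (∑ ν : Fin 4, ∑ j : Fin 6, c ν j • T ν j) * E + E * (∑ ν : Fin 4, ∑ j : Fin 6, c ν j • U ν j)
        = ∑ ν : Fin 4, ∑ j : Fin 6, c ν j • (T ν j * E + E * U ν j) := by
    intro T U c
    simp only [Finset.sum_mul, Finset.mul_sum, smul_mul_assoc, mul_smul_comm, smul_add,
      Finset.sum_add_distrib]
  have expand3 : ∀ (T U : Fin 6 → Fin 6 → Cl) (c : Fin 6 → Fin 6 → ℝ),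
      (∑ j : Fin 6, ∑ k : Fin 6, c j k • T j k) * E + E * (∑ j : Fin 6, ∑ k : Fin 6, c j k • U j k)
        = ∑ j : Fin 6, ∑ k : Fin 6, c j k • (T j k * E + E * U j k) := by
    intro T U c
    simp only [Finset.sum_mul, Finset.mul_sum, smul_mul_assoc, mul_smul_comm, smul_add,
      Finset.sum_add_distrib]
  have p1 : (∑ ν : Fin 4, ∑ σ' : Fin 4, w ν σ' • (e (tIdx σ') * e (tIdx ν))) * E
      + E * (∑ ν : Fin 4, ∑ σ' : Fin 4, w ν σ' • (e (tIdx ν) * e (tIdx σ'))) = 0 := by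
    rw [expand]
    refine Finset.sum_eq_zero fun ν _ => Finset.sum_eq_zero fun σ' _ => ?_
    rw [mul_assoc, hE, e_triple, ηm_tn, ηm_tn]
    rcases eq_or_ne σ' ν with rfl | hne
    · rw [hw0]; simp
    · rw [ηm_tt _ _ hne]; simp
  have p2 : (∑ ν : Fin 4, ∑ j : Fin 6, h ν j • (e (nIdx j) * e (tIdx ν))) * E
      + E * (∑ ν : Fin 4, ∑ j : Fin 6, h ν j • (e (tIdx ν) * e (nIdx j)))
      = ∑ ν : Fin 4, (-2 * h ν i) • e (tIdx ν) := by
    rw [expand2]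
    refine Finset.sum_congr rfl fun ν _ => ?_
    have : ∀ j : Fin 6, h ν j • (e (nIdx j) * e (tIdx ν) * E + E * (e (tIdx ν) * e (nIdx j)))
        = if j = i then (-2 * h ν i) • e (tIdx ν) else 0 := by
      intro j
      rw [mul_assoc, hE, e_triple, ηm_tn, ηm_nn, ηm_nt]
      rcases eq_or_ne j i with rfl | hne
      · simp; module
      · rw [if_neg hne, if_neg hne]; simp
    rw [Finset.sum_congr rfl fun j _ => this j, Finset.sum_ite_eq' Finset.univ i]
    simp
  have p3 : (∑ j : Fin 6, ∑ k : Fin 6, a j k • (e (nIdx k) * e (nIdx j))) * E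
      + E * (∑ j : Fin 6, ∑ k : Fin 6, a j k • (e (nIdx j) * e (nIdx k)))
      = ∑ j : Fin 6, (4 * a i j) • e (nIdx j) := by
    rw [expand3]
    have step : ∀ j k : Fin 6, a j k • (e (nIdx k) * e (nIdx j) * E + E * (e (nIdx j) * e (nIdx k)))
        = (2 * a j k * (if j = i then 1 else 0)) • e (nIdx k)
          - (2 * a j k * (if k = i then 1 else 0)) • e (nIdx j)
          + (2 * a j k * (if k = j then 1 else 0)) • E := by
      intro j k
      rw [mul_assoc, hE, e_triple, ηm_nn, ηm_nn, ηm_nn]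
      module
    calc ∑ j : Fin 6, ∑ k : Fin 6, a j k • (e (nIdx k) * e (nIdx j) * E + E * (e (nIdx j) * e (nIdx k)))
        = ∑ j : Fin 6, ∑ k : Fin 6, ((2 * a j k * (if j = i then 1 else 0)) • e (nIdx k)
          - (2 * a j k * (if k = i then 1 else 0)) • e (nIdx j)
          + (2 * a j k * (if k = j then 1 else 0)) • E) := by
          exact Finset.sum_congr rfl fun j _ => Finset.sum_congr rfl fun k _ => step j k
      _ = ∑ j : Fin 6, (4 * a i j) • e (nIdx j) := by
          simp only [Finset.sum_add_distrib, Finset.sum_sub_distrib]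
          have s1 : ∑ j : Fin 6, ∑ k : Fin 6, (2 * a j k * (if j = i then 1 else 0)) • e (nIdx k)
              = ∑ k : Fin 6, (2 * a i k) • e (nIdx k) := by
            have t1 : ∀ j : Fin 6, (∑ k : Fin 6, (2 * a j k * (if j = i then 1 else 0)) • e (nIdx k))
                = if j = i then ∑ k : Fin 6, (2 * a i k) • e (nIdx k) else 0 := by
              intro j
              rcases eq_or_ne j i with rfl | hne
              · simp
              · simp [hne]
            rw [Finset.sum_congr rfl fun j _ => t1 j, Finset.sum_ite_eq' Finset.univ i]
            simp
          have s2 : ∑ j : Fin 6, ∑ k : Fin 6, (2 * a j k * (if k = i then 1 else 0)) • e (nIdx j)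
              = ∑ j : Fin 6, (2 * a j i) • e (nIdx j) := by
            refine Finset.sum_congr rfl fun j _ => ?_
            rw [Finset.sum_congr rfl (fun k (_ : k ∈ Finset.univ) => by
              rcases eq_or_ne k i with rfl | hne
              · simp
              · simp [hne] : ∀ k ∈ Finset.univ,
                (2 * a j k * (if k = i then 1 else 0)) • e (nIdx j)
                  = if k = i then (2 * a j i) • e (nIdx j) else 0)]
            rw [Finset.sum_ite_eq' Finset.univ i]
            simp
          have s3 : ∑ j : Fin 6, ∑ k : Fin 6, (2 * a j k * (if k = j then 1 else 0)) • E = 0 := by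
            refine Finset.sum_eq_zero fun j _ => ?_
            refine Finset.sum_eq_zero fun k _ => ?_
            rcases eq_or_ne k j with rfl | hne
            · rw [ha0]; simp
            · rw [if_neg hne]; simp
          rw [s1, s2, s3]
          rw [← Finset.sum_sub_distrib]
          simp only [add_zero]
          refine Finset.sum_congr rfl fun j _ => ?_
          rw [ha j i]
          module
  calc ((1/4 : ℝ) • ∑ ν : Fin 4, ∑ σ' : Fin 4, w ν σ' • (e (tIdx σ') * e (tIdx ν))
        + (1/2 : ℝ) • ∑ ν : Fin 4, ∑ j : Fin 6, h ν j • (e (nIdx j) * e (tIdx ν))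
        + (1/4 : ℝ) • ∑ j : Fin 6, ∑ k : Fin 6, a j k • (e (nIdx k) * e (nIdx j))) * E
      + E * ((1/4 : ℝ) • ∑ ν : Fin 4, ∑ σ' : Fin 4, w ν σ' • (e (tIdx ν) * e (tIdx σ'))
        + (1/2 : ℝ) • ∑ ν : Fin 4, ∑ j : Fin 6, h ν j • (e (tIdx ν) * e (nIdx j))
        + (1/4 : ℝ) • ∑ j : Fin 6, ∑ k : Fin 6, a j k • (e (nIdx j) * e (nIdx k)))
      = (1/4 : ℝ) • ((∑ ν : Fin 4, ∑ σ' : Fin 4, w ν σ' • (e (tIdx σ') * e (tIdx ν))) * E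
          + E * (∑ ν : Fin 4, ∑ σ' : Fin 4, w ν σ' • (e (tIdx ν) * e (tIdx σ'))))
        + (1/2 : ℝ) • ((∑ ν : Fin 4, ∑ j : Fin 6, h ν j • (e (nIdx j) * e (tIdx ν))) * E
          + E * (∑ ν : Fin 4, ∑ j : Fin 6, h ν j • (e (tIdx ν) * e (nIdx j))))
        + (1/4 : ℝ) • ((∑ j : Fin 6, ∑ k : Fin 6, a j k • (e (nIdx k) * e (nIdx j))) * E
          + E * (∑ j : Fin 6, ∑ k : Fin 6, a j k • (e (nIdx j) * e (nIdx k)))) := by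
        simp only [add_mul, mul_add, smul_mul_assoc, mul_smul_comm, smul_add]; abel
    _ = - ∑ β : Fin 4, h β i • e (tIdx β) + ∑ j : Fin 6, a i j • e (nIdx j) := by
        rw [p1, p2, p3, smul_zero, zero_add, Finset.smul_sum, Finset.smul_sum]
        have A : ∀ ν : Fin 4, (1/2 : ℝ) • ((-2 * h ν i) • e (tIdx ν)) = -(h ν i • e (tIdx ν)) :=
          fun ν => by module
        have B : ∀ j : Fin 6, (1/4 : ℝ) • ((4 * a i j) • e (nIdx j)) = a i j • e (nIdx j) :=
          fun j => by module
        rw [Finset.sum_congr rfl fun ν _ => A ν, Finset.sum_congr rfl fun j _ => B j,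
          Finset.sum_neg_distrib]

/-- ordered products of basis vectors, indexed by finsets -/
def P (s : Finset (Fin 10)) : Cl := ((s.sort (· ≤ ·)).map e).prod

lemma mul_list_prod (I : Fin 10) :
    ∀ (l : List (Fin 10)), l.Pairwise (· < ·) →
      ∃ (c : ℝ) (l' : List (Fin 10)), l'.Pairwise (· < ·) ∧ (∀ x ∈ l', x = I ∨ x ∈ l) ∧
        e I * (l.map e).prod = c • (l'.map e).prod := by
  intro l
  induction l with
  | nil =>
    intro _
    exact ⟨1, [I], List.pairwise_singleton _ I, by simp, by simp⟩
  | cons a t ih =>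
    intro hsort
    have ha : ∀ b ∈ t, a < b := fun _ hb => List.rel_of_pairwise_cons hsort hb
    have ht : t.Pairwise (· < ·) := List.Pairwise.of_cons hsort
    rcases lt_trichotomy I a with hIa | rfl | haI
    · refine ⟨1, I :: a :: t, ?_, by simp +contextual [or_comm], by simp⟩
      exact List.pairwise_cons.2 ⟨by
        intro b hb
        rcases List.mem_cons.1 hb with rfl | hb'
        · exact hIa
        · exact hIa.trans (ha b hb'), hsort⟩
    · refine ⟨ηv I, t, ht, by simp +contextual, ?_⟩
      rw [List.map_cons, List.prod_cons, ← mul_assoc, e_sq, Algebra.algebraMap_eq_smul_one,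
        smul_mul_assoc, one_mul]
    · obtain ⟨c, l', hl', hmem, heq⟩ := ih ht
      refine ⟨-c, a :: l', ?_, ?_, ?_⟩
      · refine List.pairwise_cons.2 ⟨?_, hl'⟩
        intro b hb
        rcases hmem b hb with rfl | hb'
        · exact haI
        · exact ha b hb'
      · intro x hx
        rcases List.mem_cons.1 hx with rfl | hx'
        · exact Or.inr List.mem_cons_self
        · rcases hmem x hx' with rfl | h'
          · exact Or.inl rfl
          · exact Or.inr (List.mem_cons_of_mem _ h')
      · have hIa' : ηm a I = 0 := by
          rw [ηm, if_neg]; exact fun hh => absurd hh (by exact fun hh => (lt_irrefl a (hh ▸ haI)))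
        rw [List.map_cons, List.prod_cons, ← mul_assoc, e_swap, hIa']
        rw [List.map_cons, List.prod_cons]
        rw [sub_mul, smul_mul_assoc, one_mul, mul_assoc, heq]
        simp [mul_smul_comm]
lemma sorted_lt_toFinset_sort {l : List (Fin 10)} (hl : l.Pairwise (· < ·)) :
    (l.toFinset.sort (· ≤ ·)) = l :=
  (List.toFinset_sort _ hl.nodup).2 (hl.imp le_of_lt)

def SpanP : Submodule ℝ Cl := Submodule.span ℝ (Set.range P)

lemma e_mul_P_mem (I : Fin 10) (s : Finset (Fin 10)) : e I * P s ∈ SpanP := by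
  obtain ⟨c, l', hl', _, heq⟩ := mul_list_prod I (s.sort (· ≤ ·)) (Finset.sortedLT_sort s).pairwise
  rw [P, heq]
  have : ((l'.map e).prod) = P l'.toFinset := by
    rw [P, sorted_lt_toFinset_sort hl']
  rw [this]
  exact Submodule.smul_mem _ _ (Submodule.subset_span ⟨_, rfl⟩)

lemma e_mul_mem (I : Fin 10) {z : Cl} (hz : z ∈ SpanP) : e I * z ∈ SpanP := by
  induction hz using Submodule.span_induction with
  | mem x hx => obtain ⟨s, rfl⟩ := hx; exact e_mul_P_mem I s
  | zero => simpa using Submodule.zero_mem SpanP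
  | add x y _ _ hx hy => rw [mul_add]; exact Submodule.add_mem _ hx hy
  | smul c x _ hx => rw [mul_smul_comm]; exact Submodule.smul_mem _ _ hx

lemma list_mul_mem (l : List (Fin 10)) {z : Cl} (hz : z ∈ SpanP) :
    (l.map e).prod * z ∈ SpanP := by
  induction l with
  | nil => simpa using hz
  | cons a t ih =>
    rw [List.map_cons, List.prod_cons, mul_assoc]
    exact e_mul_mem a (ih)

lemma mul_mem_spanP {x y : Cl} (hx : x ∈ SpanP) (hy : y ∈ SpanP) : x * y ∈ SpanP := by
  induction hx using Submodule.span_induction with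
  | mem x hx => obtain ⟨s, rfl⟩ := hx; exact list_mul_mem _ hy
  | zero => simpa using Submodule.zero_mem SpanP
  | add x₁ x₂ _ _ h1 h2 => rw [add_mul]; exact Submodule.add_mem _ h1 h2
  | smul c x _ hx => rw [smul_mul_assoc]; exact Submodule.smul_mem _ _ hx

lemma spanP_eq_top : SpanP = ⊤ := by
  refine eq_top_iff.2 fun x hx => ?_
  clear hx
  induction x using CliffordAlgebra.induction with
  | algebraMap r =>
    have h1 : (1 : Cl) ∈ SpanP := by
      have : P ∅ = 1 := by simp [P]
      exact this ▸ Submodule.subset_span ⟨∅, rfl⟩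
    rw [Algebra.algebraMap_eq_smul_one]
    exact Submodule.smul_mem _ _ h1
  | ι m =>
    have hm : m = ∑ I : Fin 10, m I • (Pi.single I 1 : Fin 10 → ℝ) := by
      ext k
      rw [Finset.sum_apply]
      rw [Finset.sum_eq_single k]
      · simp
      · intro b _ hb; simp [Pi.single_apply, Ne.symm hb]
      · simp
    rw [hm, map_sum]
    refine Submodule.sum_mem _ fun I _ => ?_
    rw [map_smul]
    have : ι Qm (Pi.single I (1:ℝ)) = P {I} := by
      rw [P, Finset.sort_singleton]; simp [e]
    rw [this]
    exact Submodule.smul_mem _ _ (Submodule.subset_span ⟨_, rfl⟩)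
  | mul a b ha hb => exact mul_mem_spanP ha hb
  | add a b ha hb => exact Submodule.add_mem _ ha hb

instance : Module.Finite ℝ Cl := by
  refine ⟨⟨Set.Finite.toFinset (Set.finite_range P), ?_⟩⟩
  rw [Set.Finite.coe_toFinset]
  exact spanP_eq_top

/-- If `ψ` satisfies the Killing spin field equation, the normal frame vectors
`𝐞_i = reverse(ψ) e_i ψ` satisfy `d𝐞_i = −H_i^β 𝐞_β + A_i^j 𝐞_j`. -/
theorem stmt_2 (nCl : AddGroupNorm Cl)
    (hns : ∀ (c : ℝ) (x : Cl), nCl (c • x) ≤ ‖c‖ * nCl x) :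
    letI : NormedAddCommGroup Cl := nCl.toNormedAddCommGroup
    letI : NormedSpace ℝ Cl := { norm_smul_le := hns }
    ∀ (ψ : (Fin 4 → ℝ) → Cl)
      (ω : Fin 4 → Fin 4 → Fin 4 → (Fin 4 → ℝ) → ℝ)
      (H : Fin 4 → Fin 4 → Fin 6 → (Fin 4 → ℝ) → ℝ)
      (A : Fin 4 → Fin 6 → Fin 6 → (Fin 4 → ℝ) → ℝ),
      Differentiable ℝ ψ →
      (∀ μ ν σ x, ω μ ν σ x = - ω μ σ ν x) →
      (∀ μ i j x, A μ i j x = - A μ j i x) →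
      (∀ μ x, fderiv ℝ ψ x (Pi.single μ 1) = Kfield ω H A μ x * ψ x) →
      ∀ (i : Fin 6) (σ : Fin 4) (x : Fin 4 → ℝ),
        fderiv ℝ (fun y => reverse (Q := Qm) (ψ y) * e (nIdx i) * ψ y) x (Pi.single σ 1) =
          - ∑ β : Fin 4, H σ β i x • (reverse (Q := Qm) (ψ x) * e (tIdx β) * ψ x)
          + ∑ j : Fin 6, A σ i j x • (reverse (Q := Qm) (ψ x) * e (nIdx j) * ψ x) := by
  letI : NormedAddCommGroup Cl := nCl.toNormedAddCommGroup
  letI : NormedSpace ℝ Cl := { norm_smul_le := hns }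
  intro ψ ω H A hdiff hω hA hK i σ x
  classical
  -- the continuous linear map version of `reverse`
  let rL : Cl →L[ℝ] Cl := LinearMap.toContinuousLinearMap (reverse (Q := Qm))
  have hrL : ∀ z : Cl, rL z = reverse (Q := Qm) z := fun z => by
    simp [rL, LinearMap.coe_toContinuousLinearMap']
  -- the continuous bilinear map `(a, b) ↦ a * e (nIdx i) * b`
  let bl : Cl →ₗ[ℝ] Cl →ₗ[ℝ] Cl := (LinearMap.mul ℝ Cl).comp (LinearMap.mulRight ℝ (e (nIdx i)))
  let B : Cl →L[ℝ] Cl →L[ℝ] Cl := LinearMap.toContinuousLinearMap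
    (((LinearMap.toContinuousLinearMap :
        (Cl →ₗ[ℝ] Cl) ≃ₗ[ℝ] (Cl →L[ℝ] Cl))).toLinearMap.comp bl)
  have hBval : ∀ a b : Cl, B a b = a * e (nIdx i) * b := by
    intro a b
    simp [B, bl, LinearMap.coe_toContinuousLinearMap']
  have hψ : HasFDerivAt ψ (fderiv ℝ ψ x) x := (hdiff x).hasFDerivAt
  have hrψ : HasFDerivAt (fun y => rL (ψ y)) (rL.comp (fderiv ℝ ψ x)) x :=
    rL.hasFDerivAt.comp x hψ
  have hf : HasFDerivAt (fun y => B (rL (ψ y)) (ψ y))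
      (B.precompR (Fin 4 → ℝ) (rL (ψ x)) (fderiv ℝ ψ x)
        + B.precompL (Fin 4 → ℝ) (rL.comp (fderiv ℝ ψ x)) (ψ x)) x :=
    B.hasFDerivAt_of_bilinear hrψ hψ
  have hfun : (fun y => reverse (Q := Qm) (ψ y) * e (nIdx i) * ψ y)
      = fun y => B (rL (ψ y)) (ψ y) := by
    funext y; rw [hBval, hrL]
  rw [hfun, hf.fderiv]
  have hDval : fderiv ℝ ψ x (Pi.single σ 1) = Kfield ω H A σ x * ψ x := hK σ x
  have hL : (B.precompR (Fin 4 → ℝ) (rL (ψ x)) (fderiv ℝ ψ x)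
        + B.precompL (Fin 4 → ℝ) (rL.comp (fderiv ℝ ψ x)) (ψ x)) (Pi.single σ 1)
      = B (rL (ψ x)) (Kfield ω H A σ x * ψ x) + B (rL (Kfield ω H A σ x * ψ x)) (ψ x) := by
    simp [ContinuousLinearMap.precompR, ContinuousLinearMap.precompL, hDval]
  rw [hL, hBval, hBval, hrL, hrL]
  -- now a pure algebra computation
  have halg := key_alg (fun ν σ' => ω σ ν σ' x) (fun ν j => H σ ν j x) (fun j k => A σ j k x)
    (fun ν σ' => hω σ ν σ' x) (fun j k => hA σ j k x) i
  have hKf : Kfield ω H A σ x = (1/4 : ℝ) • ∑ ν : Fin 4, ∑ σ' : Fin 4,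
        ω σ ν σ' x • (e (tIdx ν) * e (tIdx σ'))
      + (1/2 : ℝ) • ∑ ν : Fin 4, ∑ j : Fin 6, H σ ν j x • (e (tIdx ν) * e (nIdx j))
      + (1/4 : ℝ) • ∑ j : Fin 6, ∑ k : Fin 6, A σ j k x • (e (nIdx j) * e (nIdx k)) := rfl
  rw [← hKf] at halg
  set K := Kfield ω H A σ x with hKdef
  set ψx := ψ x
  set rψ := reverse (Q := Qm) ψx with hrψx
  have hrevK : reverse (Q := Qm) (K * ψx) = rψ * reverse (Q := Qm) K := by
    rw [reverse.map_mul]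
  calc rψ * e (nIdx i) * (K * ψx) + reverse (Q := Qm) (K * ψx) * e (nIdx i) * ψx
      = rψ * ((reverse (Q := Qm) K * e (nIdx i) + e (nIdx i) * K) * ψx) := by
        rw [hrevK]
        simp only [add_mul, mul_add, mul_assoc]
        rw [add_comm]
    _ = rψ * ((- ∑ β : Fin 4, H σ β i x • e (tIdx β)
          + ∑ j : Fin 6, A σ i j x • e (nIdx j)) * ψx) := by rw [halg]
    _ = - ∑ β : Fin 4, H σ β i x • (rψ * e (tIdx β) * ψx)
          + ∑ j : Fin 6, A σ i j x • (rψ * e (nIdx j) * ψx) := by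
        simp only [add_mul, neg_mul, Finset.sum_mul, smul_mul_assoc, mul_add, mul_neg,
          Finset.mul_sum, mul_smul_comm, mul_assoc]
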